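/- Let G_c be the universal comparison graph of the lattice graph (ℤ², ℓ¹) and identify the vertices of ℤ² with ℕ_{≥1} via the spiral labelling. For every edge (i, j) of the lattice graph with spiral labels i < j, the path Ψ(i,j) has length at most 4; equivalently, the smallest integer k such that k ≥ j and i lies on the path in G_c from 1 to k satisfies d_{G_c}(i, k) ≤ 4. -/

import Mathlib

open scoped ENNReal Classical

noncomputable section

/-- A function on a countable vertex set *vanishes at infinity* if every
super-level set `{x : t < |f x|}` with `t > 0` is finite. -/
def VanishesAtInfinity {V : Type*} (f : V → ℝ) : Prop :=
  ∀ t : ℝ, 0 < t → {x : V | t < |f x|}.Finite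

/-- The `k`-th largest value (k ≥ 1, counted with multiplicity) assumed by `|f|`. -/
def kthLargest {V : Type*} (f : V → ℝ) (k : ℕ) : ℝ :=
  sInf {t : ℝ | 0 ≤ t ∧ {x : V | t < |f x|}.Finite ∧ {x : V | t < |f x|}.ncard < k}

/-- The rearrangement of `f` with respect to the labelling `η`, where `η n` is the
vertex carrying label `n + 1`:  `f*(η (k-1)) = k`-th largest value of `|f|`. -/
def rearrangementOf {V : Type*} (η : ℕ → V) (f : V → ℝ) : V → ℝ :=
  fun v => kthLargest f (Function.invFun η v + 1)

/-- `‖∇f‖_p^p = Σ_{x∼y} |f x - f y|^p`, each edge counted once (value in `ℝ≥0∞`). -/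
def gradPPow {V : Type*} (G : SimpleGraph V) (f : V → ℝ) (p : ℝ) : ℝ≥0∞ :=
  ∑' e : G.edgeSet, Sym2.lift
    ⟨fun x y => ENNReal.ofReal (|f x - f y| ^ p), fun x y => by dsimp only; rw [abs_sub_comm]⟩
    (e : Sym2 V)

/-- `‖∇f‖_p = (Σ_{x∼y} |f x - f y|^p)^{1/p}` (value in `ℝ≥0∞`). -/
def gradP {V : Type*} (G : SimpleGraph V) (f : V → ℝ) (p : ℝ) : ℝ≥0∞ :=
  gradPPow G f p ^ (1 / p)

/-- `‖∇f‖_∞ = sup_{x∼y} |f x - f y|` (value in `ℝ≥0∞`). -/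
def gradTop {V : Type*} (G : SimpleGraph V) (f : V → ℝ) : ℝ≥0∞ :=
  ⨆ e : G.edgeSet, Sym2.lift
    ⟨fun x y => ENNReal.ofReal |f x - f y|, fun x y => by dsimp only; rw [abs_sub_comm]⟩
    (e : Sym2 V)

/-- The vertex boundary `∂_V(X)` of a set of vertices. -/
def vertexBoundary {V : Type*} (G : SimpleGraph V) (X : Set V) : Set V :=
  {z : V | z ∉ X ∧ ∃ x ∈ X, G.Adj z x}

/-- The isoperimetric number `∂_V^n`: the least vertex-perimeter among sets of `n` vertices. -/
def isoNum {V : Type*} (G : SimpleGraph V) (n : ℕ) : ℕ :=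
  sInf {m : ℕ | ∃ X : Set V, X.Finite ∧ X.ncard = n ∧
    (vertexBoundary G X).Finite ∧ (vertexBoundary G X).ncard = m}

/-- `∂_V^n` with the convention `∂_V^0 = 1`. -/
def isoNum₀ {V : Type*} (G : SimpleGraph V) (n : ℕ) : ℕ :=
  if n = 0 then 1 else isoNum G n

/-- `b` is a neighbour of `a` larger than `a` in the universal comparison graph:
`(a-1) + ∂_V^{a-1} < b ≤ a + ∂_V^a`. -/
def cAdj {V : Type*} (G : SimpleGraph V) (a b : ℕ+) : Prop :=
  a < b ∧ (a : ℕ) - 1 + isoNum₀ G ((a : ℕ) - 1) < (b : ℕ) ∧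
    (b : ℕ) ≤ (a : ℕ) + isoNum G (a : ℕ)

/-- The universal comparison graph `G_c` of `G`, a graph on the positive integers. -/
def comparisonGraph {V : Type*} (G : SimpleGraph V) : SimpleGraph ℕ+ where
  Adj a b := cAdj G a b ∨ cAdj G b a
  symm := ⟨fun a b h => h.symm⟩
  loopless := ⟨fun a h => by
    rcases h with h | h <;> exact absurd h.1 (lt_irrefl a)⟩

/-- The lattice graph `(ℤ², ℓ¹)`. -/
def latticeZ2 : SimpleGraph (ℤ × ℤ) where
  Adj x y := |x.1 - y.1| + |x.2 - y.2| = 1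
  symm := by
    constructor; intro x y h; try beta_reduce at h ⊢
    rw [abs_sub_comm y.1 x.1, abs_sub_comm y.2 x.2]
    exact h
  loopless := by constructor; intro x h; simp at h

/-- The lattice graph `(ℤ^d, ℓ¹)`. -/
def latticeZd (d : ℕ) : SimpleGraph (Fin d → ℤ) where
  Adj x y := (∑ i, |x i - y i|) = 1
  symm := by
    constructor; intro x y h
    have : ∀ i, |y i - x i| = |x i - y i| := fun i => abs_sub_comm _ _
    simpa [this] using h
  loopless := by constructor; intro x h; simp at h

/-- `ℓ¹`-norm on `ℤ²`. -/
def l1 (x : ℤ × ℤ) : ℤ := |x.1| + |x.2|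

/-- One step of the counterclockwise square spiral on `ℤ²`. -/
def spiralNext : ℤ × ℤ → ℤ × ℤ := fun p =>
  if p.1 = 0 ∧ p.2 = 0 then (1, 0)
  else if p.2 < 0 ∧ |p.1| ≤ -p.2 then (p.1 + 1, p.2)
  else if 0 < p.1 ∧ |p.2| < p.1 then (p.1, p.2 + 1)
  else if 0 < p.2 ∧ p.1 ≤ p.2 ∧ -p.1 < p.2 then (p.1 - 1, p.2)
  else (p.1, p.2 - 1)
/-- The spiral labelling of `ℤ²` (0-indexed): `spiral (k-1)` is the vertex with
spiral label `k`, so `spiral 0 = (0,0)`, `spiral 1 = (1,0)`, `spiral 2 = (1,1)`, … -/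
def spiral : ℕ → ℤ × ℤ := fun n => spiralNext^[n] (0, 0)

/-- The universal comparison graph of the lattice graph `(ℤ², ℓ¹)`. -/
def GcZ2 : SimpleGraph ℕ+ := comparisonGraph latticeZ2

/-- `i` lies on the path from `1` to `k` in the tree `G_c`. -/
def liesOnPathFromOne (i k : ℕ+) : Prop :=
  GcZ2.dist 1 i + GcZ2.dist i k = GcZ2.dist 1 k

namespace Psi

def bset (n : ℕ) : Set ℕ :=
  {m | ∃ X : Set (ℤ×ℤ), X.Finite ∧ X.ncard = n ∧
    (vertexBoundary latticeZ2 X).Finite ∧ (vertexBoundary latticeZ2 X).ncard = m}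

lemma isoNum_def (n : ℕ) : isoNum latticeZ2 n = sInf (bset n) := rfl

lemma adj_cases {p q : ℤ × ℤ} (h : latticeZ2.Adj p q) :
    (q.1 = p.1+1 ∧ q.2 = p.2) ∨ (q.1 = p.1-1 ∧ q.2 = p.2) ∨
    (q.1 = p.1 ∧ q.2 = p.2+1) ∨ (q.1 = p.1 ∧ q.2 = p.2-1) := by
  have h' : |p.1 - q.1| + |p.2 - q.2| = 1 := h
  rcases abs_cases (p.1 - q.1) with ⟨h1, h1'⟩ | ⟨h1, h1'⟩ <;>
    rcases abs_cases (p.2 - q.2) with ⟨h2, h2'⟩ | ⟨h2, h2'⟩ <;>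
    rw [h1, h2] at h' <;> omega

lemma adj_of_eq {p q : ℤ × ℤ}
    (h : (q.1 = p.1+1 ∧ q.2 = p.2) ∨ (q.1 = p.1-1 ∧ q.2 = p.2) ∨
      (q.1 = p.1 ∧ q.2 = p.2+1) ∨ (q.1 = p.1 ∧ q.2 = p.2-1)) :
    latticeZ2.Adj p q := by
  show |p.1 - q.1| + |p.2 - q.2| = 1
  rcases h with ⟨h1,h2⟩|⟨h1,h2⟩|⟨h1,h2⟩|⟨h1,h2⟩ <;> rw [h1, h2] <;>
    first
    | (rw [show p.1 - (p.1+1) = -1 by ring, sub_self]; decide)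
    | (rw [show p.1 - (p.1-1) = 1 by ring, sub_self]; decide)
    | (rw [show p.2 - (p.2+1) = -1 by ring, sub_self]; decide)
    | (rw [show p.2 - (p.2-1) = 1 by ring, sub_self]; decide)


lemma adjE (a b : ℤ) : latticeZ2.Adj (a+1, b) (a, b) := by
  show |a+1 - a| + |b - b| = 1
  rw [show a+1-a = 1 by ring, sub_self]; decide

lemma adjW (a b : ℤ) : latticeZ2.Adj (a-1, b) (a, b) := by
  show |a-1 - a| + |b - b| = 1
  rw [show a-1-a = -1 by ring, sub_self]; decide

lemma adjN (a b : ℤ) : latticeZ2.Adj (a, b+1) (a, b) := by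
  show |a - a| + |b+1 - b| = 1
  rw [show b+1-b = 1 by ring, sub_self]; decide

lemma adjS (a b : ℤ) : latticeZ2.Adj (a, b-1) (a, b) := by
  show |a - a| + |b-1 - b| = 1
  rw [show b-1-b = -1 by ring, sub_self]; decide

lemma bset_nonempty (n : ℕ) : (bset n).Nonempty := by
  classical
  set F : Finset (ℤ×ℤ) := (Finset.Ico (0:ℤ) (n:ℤ)).image (fun t => (t, 0)) with hF
  set X : Set (ℤ×ℤ) := ↑F with hXdef
  have hXfin : X.Finite := F.finite_toSet
  have hinj : Function.Injective (fun t : ℤ => ((t, 0) : ℤ×ℤ)) := by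
    intro a b h; simpa using congrArg Prod.fst h
  have hcard : X.ncard = n := by
    rw [hXdef, Set.ncard_coe_finset, hF, Finset.card_image_of_injective _ hinj]
    simp [Int.card_Ico]
  have hBsub : vertexBoundary latticeZ2 X ⊆
      ↑(((Finset.Icc (-1:ℤ) (n:ℤ)) ×ˢ (Finset.Icc (-1:ℤ) 1))) := by
    rintro z ⟨hz, x, hxX, hadj⟩
    have hx : x ∈ F := hxX
    simp only [hF, Finset.mem_image, Finset.mem_Ico] at hx
    obtain ⟨t, ⟨ht0, htn⟩, rfl⟩ := hx
    have h4 := adj_cases hadj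
    simp only [Finset.coe_product, Set.mem_prod, Finset.mem_coe, Finset.mem_Icc]
    simp only at h4
    constructor <;> omega
  exact ⟨_, X, hXfin, hcard, Set.Finite.subset (Finset.finite_toSet _) hBsub, rfl⟩

lemma rowfin {X : Set (ℤ×ℤ)} (hX : X.Finite) (y : ℤ) : {a : ℤ | (a, y) ∈ X}.Finite := by
  have : {a : ℤ | (a, y) ∈ X} = (fun a : ℤ => ((a, y) : ℤ×ℤ)) ⁻¹' X := rfl
  rw [this]
  exact Set.Finite.preimage (fun a _ b _ h => by simpa using congrArg Prod.fst h) hX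

lemma colfin {X : Set (ℤ×ℤ)} (hX : X.Finite) (x : ℤ) : {b : ℤ | (x, b) ∈ X}.Finite := by
  have : {b : ℤ | (x, b) ∈ X} = (fun b : ℤ => ((x, b) : ℤ×ℤ)) ⁻¹' X := rfl
  rw [this]
  exact Set.Finite.preimage (fun a _ b _ h => by simpa using congrArg Prod.snd h) hX

lemma boundary_ge_rows {X : Set (ℤ×ℤ)} (hX : X.Finite)
    (hB : (vertexBoundary latticeZ2 X).Finite) :
    2 * (Prod.snd '' X).ncard ≤ (vertexBoundary latticeZ2 X).ncard := by
  classical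
  set B := vertexBoundary latticeZ2 X with hBdef
  set R := Prod.snd '' X with hRdef
  have hRfin : R.Finite := hX.image _
  set M : ℤ → ℤ := fun y => sSup {a : ℤ | (a, y) ∈ X} with hM
  set m : ℤ → ℤ := fun y => sInf {a : ℤ | (a, y) ∈ X} with hm
  have hrow : ∀ y ∈ R, (M y, y) ∈ X ∧ (m y, y) ∈ X ∧ ∀ a : ℤ, (a,y) ∈ X → m y ≤ a ∧ a ≤ M y := by
    rintro y ⟨p, hp, rfl⟩
    have hfin := rowfin hX p.2
    have hne : {a : ℤ | (a, p.2) ∈ X}.Nonempty := ⟨p.1, by simpa using hp⟩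
    refine ⟨hne.csSup_mem hfin, hne.csInf_mem hfin, fun a ha => ⟨csInf_le hfin.bddBelow ha, le_csSup hfin.bddAbove ha⟩⟩
  have hB1 : ∀ y ∈ R, (M y + 1, y) ∈ B := by
    intro y hy
    obtain ⟨h1, h2, h3⟩ := hrow y hy
    exact ⟨fun hmem => by have := (h3 _ hmem).2; omega, (M y, y), h1, adjE _ _⟩
  have hB2 : ∀ y ∈ R, (m y - 1, y) ∈ B := by
    intro y hy
    obtain ⟨h1, h2, h3⟩ := hrow y hy
    exact ⟨fun hmem => by have := (h3 _ hmem).1; omega, (m y, y), h2, adjW _ _⟩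
  set B1 := (fun y => ((M y + 1, y) : ℤ×ℤ)) '' R with hB1def
  set B2 := (fun y => ((m y - 1, y) : ℤ×ℤ)) '' R with hB2def
  have hsub : B1 ∪ B2 ⊆ B := by
    rintro z (⟨y, hy, rfl⟩ | ⟨y, hy, rfl⟩)
    · exact hB1 y hy
    · exact hB2 y hy
  have hd : Disjoint B1 B2 := by
    rw [Set.disjoint_left]
    intro z hz1 hz2
    obtain ⟨y, hy, hzy⟩ := hz1
    obtain ⟨y', hy', hz⟩ := hz2
    rw [← hzy] at hz
    have hyy : y' = y := congrArg Prod.snd hz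
    have e1 := congrArg Prod.fst hz
    simp only at e1 hyy
    rw [hyy] at e1
    have h1 := (hrow y hy).1
    have h3 := ((hrow y hy).2.2 _ h1).1
    omega
  have hc1 : B1.ncard = R.ncard := Set.ncard_image_of_injOn (fun a _ b _ h => congrArg Prod.snd h)
  have hc2 : B2.ncard = R.ncard := Set.ncard_image_of_injOn (fun a _ b _ h => congrArg Prod.snd h)
  calc 2 * R.ncard = B1.ncard + B2.ncard := by omega
    _ = (B1 ∪ B2).ncard := (Set.ncard_union_eq hd (hRfin.image _) (hRfin.image _)).symm
    _ ≤ B.ncard := Set.ncard_le_ncard hsub hB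

lemma boundary_ge_cols {X : Set (ℤ×ℤ)} (hX : X.Finite)
    (hB : (vertexBoundary latticeZ2 X).Finite) :
    2 * (Prod.fst '' X).ncard ≤ (vertexBoundary latticeZ2 X).ncard := by
  classical
  set B := vertexBoundary latticeZ2 X with hBdef
  set R := Prod.fst '' X with hRdef
  have hRfin : R.Finite := hX.image _
  set M : ℤ → ℤ := fun x => sSup {b : ℤ | (x, b) ∈ X} with hM
  set m : ℤ → ℤ := fun x => sInf {b : ℤ | (x, b) ∈ X} with hm
  have hrow : ∀ x ∈ R, (x, M x) ∈ X ∧ (x, m x) ∈ X ∧ ∀ b : ℤ, (x,b) ∈ X → m x ≤ b ∧ b ≤ M x := by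
    rintro x ⟨p, hp, rfl⟩
    have hfin := colfin hX p.1
    have hne : {b : ℤ | (p.1, b) ∈ X}.Nonempty := ⟨p.2, by simpa using hp⟩
    refine ⟨hne.csSup_mem hfin, hne.csInf_mem hfin, fun b hb => ⟨csInf_le hfin.bddBelow hb, le_csSup hfin.bddAbove hb⟩⟩
  have hB1 : ∀ x ∈ R, (x, M x + 1) ∈ B := by
    intro x hx
    obtain ⟨h1, h2, h3⟩ := hrow x hx
    exact ⟨fun hmem => by have := (h3 _ hmem).2; omega, (x, M x), h1, adjN _ _⟩
  have hB2 : ∀ x ∈ R, (x, m x - 1) ∈ B := by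
    intro x hx
    obtain ⟨h1, h2, h3⟩ := hrow x hx
    exact ⟨fun hmem => by have := (h3 _ hmem).1; omega, (x, m x), h2, adjS _ _⟩
  set B1 := (fun x => ((x, M x + 1) : ℤ×ℤ)) '' R with hB1def
  set B2 := (fun x => ((x, m x - 1) : ℤ×ℤ)) '' R with hB2def
  have hsub : B1 ∪ B2 ⊆ B := by
    rintro z (⟨x, hx, rfl⟩ | ⟨x, hx, rfl⟩)
    · exact hB1 x hx
    · exact hB2 x hx
  have hd : Disjoint B1 B2 := by
    rw [Set.disjoint_left]
    intro z hz1 hz2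
    obtain ⟨x, hx, hzx⟩ := hz1
    obtain ⟨x', hx', hz⟩ := hz2
    rw [← hzx] at hz
    have hxx : x' = x := congrArg Prod.fst hz
    have e1 := congrArg Prod.snd hz
    simp only at e1 hxx
    rw [hxx] at e1
    have h1 := (hrow x hx).1
    have h3 := ((hrow x hx).2.2 _ h1).1
    omega
  have hc1 : B1.ncard = R.ncard := Set.ncard_image_of_injOn (fun a _ b _ h => congrArg Prod.fst h)
  have hc2 : B2.ncard = R.ncard := Set.ncard_image_of_injOn (fun a _ b _ h => congrArg Prod.fst h)
  calc 2 * R.ncard = B1.ncard + B2.ncard := by omega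
    _ = (B1 ∪ B2).ncard := (Set.ncard_union_eq hd (hRfin.image _) (hRfin.image _)).symm
    _ ≤ B.ncard := Set.ncard_le_ncard hsub hB

lemma boundary_sq {X : Set (ℤ×ℤ)} (hX : X.Finite)
    (hB : (vertexBoundary latticeZ2 X).Finite) :
    4 * X.ncard ≤ (vertexBoundary latticeZ2 X).ncard ^ 2 := by
  have h1 := boundary_ge_rows hX hB
  have h2 := boundary_ge_cols hX hB
  have hsub : X ⊆ (Prod.fst '' X) ×ˢ (Prod.snd '' X) :=
    fun p hp => ⟨⟨p, hp, rfl⟩, ⟨p, hp, rfl⟩⟩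
  have hX2 : X.ncard ≤ (Prod.fst '' X).ncard * (Prod.snd '' X).ncard := by
    calc X.ncard ≤ ((Prod.fst '' X) ×ˢ (Prod.snd '' X)).ncard :=
          Set.ncard_le_ncard hsub ((hX.image _).prod (hX.image _))
      _ = _ := by
        rw [Set.ncard_eq_toFinset_card _ ((hX.image Prod.fst).prod (hX.image Prod.snd)),
          Set.ncard_eq_toFinset_card _ (hX.image Prod.fst),
          Set.ncard_eq_toFinset_card _ (hX.image Prod.snd),
          ← Finset.card_product]
        congr 1
        ext p
        simp [Set.Finite.mem_toFinset, Finset.mem_product]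
  calc 4 * X.ncard ≤ (2 * (Prod.fst '' X).ncard) * (2 * (Prod.snd '' X).ncard) := by ring_nf; nlinarith
    _ ≤ (vertexBoundary latticeZ2 X).ncard * (vertexBoundary latticeZ2 X).ncard :=
        Nat.mul_le_mul h2 h1
    _ = _ := (sq _).symm

lemma isoNum_lb {n : ℕ} (hn : 1 ≤ n) : Nat.sqrt (4*n - 1) + 1 ≤ isoNum latticeZ2 n := by
  obtain ⟨X, hfin, hcard, hBfin, hBcard⟩ := Nat.sInf_mem (bset_nonempty n)
  have hsq : 4 * n ≤ (isoNum latticeZ2 n)^2 := by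
    rw [isoNum_def, ← hBcard, ← hcard]
    exact boundary_sq hfin hBfin
  by_contra hcon
  push_neg at hcon
  have : isoNum latticeZ2 n ≤ Nat.sqrt (4*n-1) := by omega
  have h2 : isoNum latticeZ2 n * isoNum latticeZ2 n ≤ 4*n-1 := Nat.le_sqrt.mp this
  have : (isoNum latticeZ2 n)^2 = isoNum latticeZ2 n * isoNum latticeZ2 n := sq _
  omega

lemma isoNum_pos {n : ℕ} (hn : 1 ≤ n) : 1 ≤ isoNum latticeZ2 n :=
  le_trans (by omega) (isoNum_lb hn)

lemma isoNum_mono (n : ℕ) : isoNum latticeZ2 n ≤ isoNum latticeZ2 (n+1) := by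
  classical
  obtain ⟨X, hfin, hcard, hBfin, hBcard⟩ := Nat.sInf_mem (bset_nonempty (n+1))
  set m := sInf (bset (n+1)) with hmdef
  have hne : X.Nonempty := Set.nonempty_of_ncard_ne_zero (by omega)
  -- lexicographic maximum
  set f : ℤ×ℤ → ℤ := fun p => p.1 + p.2 with hf
  have hfX : (f '' X).Finite := hfin.image _
  have hfne : (f '' X).Nonempty := hne.image _
  set s := sSup (f '' X) with hs
  have hs_ub : ∀ p ∈ X, f p ≤ s := fun p hp => le_csSup hfX.bddAbove ⟨p, hp, rfl⟩
  set Xs := {p ∈ X | f p = s} with hXs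
  have hXsfin : Xs.Finite := hfin.subset (fun p hp => hp.1)
  have hXsne : Xs.Nonempty := by
    have hmem0 := hfne.csSup_mem hfX
    rw [Set.mem_image] at hmem0
    obtain ⟨p, hp, hpv⟩ := hmem0
    exact ⟨p, hp, hpv⟩
  have hufne : (Prod.fst '' Xs).Nonempty := hXsne.image _
  have huffin : (Prod.fst '' Xs).Finite := hXsfin.image _
  have hmem' := hufne.csSup_mem huffin
  rw [Set.mem_image] at hmem'
  obtain ⟨x, hxXs, hx1⟩ := hmem'
  have hu_ub : ∀ p ∈ Xs, p.1 ≤ x.1 := by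
    intro p hp; rw [hx1]; exact le_csSup huffin.bddAbove ⟨p, hp, rfl⟩
  have hxX : x ∈ X := hxXs.1
  have hxs : x.1 + x.2 = s := hxXs.2
  -- key exclusions
  have hnot1 : ((x.1+1, x.2) : ℤ×ℤ) ∉ X := by
    intro hmem; have := hs_ub _ hmem; simp only [hf] at this; omega
  have hnot2 : ((x.1+2, x.2) : ℤ×ℤ) ∉ X := by
    intro hmem; have := hs_ub _ hmem; simp only [hf] at this; omega
  have hnot3 : ((x.1+1, x.2+1) : ℤ×ℤ) ∉ X := by
    intro hmem; have := hs_ub _ hmem; simp only [hf] at this; omega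
  have hnot4 : ((x.1+1, x.2-1) : ℤ×ℤ) ∉ X := by
    intro hmem
    have h1 : ((x.1+1, x.2-1) : ℤ×ℤ) ∈ Xs := ⟨hmem, by simp only [hf]; omega⟩
    have := hu_ub _ h1; simp only at this; omega
  set w : ℤ×ℤ := (x.1+1, x.2) with hw
  have hwB : w ∈ vertexBoundary latticeZ2 X := by
    refine ⟨hnot1, x, hxX, ?_⟩
    have := adjE x.1 x.2
    simpa [hw] using this
  set X' := X \ {x} with hX'
  have hX'fin : X'.Finite := hfin.subset (fun p hp => hp.1)
  have hX'card : X'.ncard = n := by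
    rw [hX', Set.ncard_diff_singleton_of_mem hxX, hcard]
    omega
  have hsub : vertexBoundary latticeZ2 X' ⊆ insert x ((vertexBoundary latticeZ2 X) \ {w}) := by
    rintro z ⟨hz, y, hyX', hady⟩
    by_cases hzx : z = x
    · exact Or.inl hzx
    right
    have hzX : z ∉ X := by
      intro hmem; exact hz ⟨hmem, hzx⟩
    refine ⟨⟨hzX, y, hyX'.1, hady⟩, ?_⟩
    intro hzw
    rw [Set.mem_singleton_iff] at hzw
    subst hzw
    have h4 := adj_cases hady
    simp only [hw] at h4
    have hyne : y ≠ x := hyX'.2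
    have hyX : y ∈ X := hyX'.1
    rcases h4 with ⟨e1,e2⟩|⟨e1,e2⟩|⟨e1,e2⟩|⟨e1,e2⟩ <;> (try simp only at e1 e2)
    · refine hnot2 (by rw [show ((x.1+2:ℤ), x.2) = y from Prod.ext_iff.mpr ⟨by first | omega | (simp; omega), by first | omega | (simp; omega)⟩]; exact hyX'.1)
    · exact hyne (Prod.ext_iff.mpr ⟨by first | omega | (simp; omega), by first | omega | (simp; omega)⟩)
    · refine hnot3 (by rw [show ((x.1+1:ℤ), x.2+1) = y from Prod.ext_iff.mpr ⟨by first | omega | (simp; omega), by first | omega | (simp; omega)⟩]; exact hyX'.1)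
    · refine hnot4 (by rw [show ((x.1+1:ℤ), x.2-1) = y from Prod.ext_iff.mpr ⟨by first | omega | (simp; omega), by first | omega | (simp; omega)⟩]; exact hyX'.1)
  have hB'fin : (vertexBoundary latticeZ2 X').Finite :=
    (((hBfin.diff).insert x)).subset hsub
  have hmpos : 1 ≤ (vertexBoundary latticeZ2 X).ncard := by
    have : (vertexBoundary latticeZ2 X).Nonempty := ⟨w, hwB⟩
    rwa [← Set.ncard_pos hBfin] at this
  have hcount : (vertexBoundary latticeZ2 X').ncard ≤ (vertexBoundary latticeZ2 X).ncard := by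
    calc (vertexBoundary latticeZ2 X').ncard
        ≤ (insert x ((vertexBoundary latticeZ2 X) \ {w})).ncard :=
          Set.ncard_le_ncard hsub ((hBfin.diff).insert x)
      _ ≤ ((vertexBoundary latticeZ2 X) \ {w}).ncard + 1 := Set.ncard_insert_le _ _
      _ = (vertexBoundary latticeZ2 X).ncard - 1 + 1 := by
          rw [Set.ncard_diff_singleton_of_mem hwB]
      _ = (vertexBoundary latticeZ2 X).ncard := by omega
  have : isoNum latticeZ2 n ≤ (vertexBoundary latticeZ2 X').ncard := by
    rw [isoNum_def]
    exact Nat.sInf_le ⟨X', hX'fin, hX'card, hB'fin, rfl⟩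
  calc isoNum latticeZ2 n ≤ (vertexBoundary latticeZ2 X').ncard := this
    _ ≤ (vertexBoundary latticeZ2 X).ncard := hcount
    _ = isoNum latticeZ2 (n+1) := by rw [hBcard, isoNum_def, hmdef]

end Psi

namespace Psi

def cN (n : ℕ) : ℕ := n + isoNum₀ latticeZ2 n

lemma cN_zero : cN 0 = 1 := by simp [cN, isoNum₀]

lemma isoNum₀_eq {n : ℕ} (hn : 1 ≤ n) : isoNum₀ latticeZ2 n = isoNum latticeZ2 n := by
  unfold isoNum₀; rw [if_neg (by omega)]

def LB (n : ℕ) : ℕ := Nat.sqrt (4*n - 1) + 1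

lemma LB_mono {a b : ℕ} (h : a ≤ b) : LB a ≤ LB b := by
  unfold LB
  have := Nat.sqrt_le_sqrt (show 4*a-1 ≤ 4*b-1 by omega)
  omega

lemma cN_ge {n : ℕ} (hn : 1 ≤ n) : n + LB n ≤ cN n := by
  unfold cN
  rw [isoNum₀_eq hn]
  have := isoNum_lb hn
  unfold LB
  omega

lemma cN_lt (n : ℕ) : n < cN n := by
  rcases Nat.eq_zero_or_pos n with rfl | hn
  · simp [cN_zero]
  · have := cN_ge hn
    unfold LB at this
    omega

lemma cN_strictMono : StrictMono cN := by
  apply strictMono_nat_of_lt_succ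
  intro n
  rcases Nat.eq_zero_or_pos n with rfl | hn
  · rw [cN_zero]
    have := cN_ge (show 1 ≤ 1 by omega)
    unfold LB at this
    simp at this ⊢
    omega
  · have h1 := isoNum_mono n
    unfold cN
    rw [isoNum₀_eq hn, isoNum₀_eq (by omega)]
    omega

lemma cN_mono : Monotone cN := cN_strictMono.monotone

def pN (b : ℕ) : ℕ := sInf {a | b ≤ cN a}

lemma pN_spec (b : ℕ) : b ≤ cN (pN b) :=
  Nat.sInf_mem (⟨b, le_of_lt (cN_lt b)⟩ : {a | b ≤ cN a}.Nonempty)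

lemma pN_min {b a : ℕ} (h : a < pN b) : cN a < b := by
  by_contra h'
  push_neg at h'
  have h2 : pN b ≤ a := Nat.sInf_le h'
  omega

lemma pN_le {b a : ℕ} (h : b ≤ cN a) : pN b ≤ a := Nat.sInf_le h

lemma pN_zero : pN 0 = 0 := by
  have := pN_le (show 0 ≤ cN 0 by omega); omega

lemma pN_one : pN 1 = 0 := by
  have := pN_le (show 1 ≤ cN 0 by rw [cN_zero]); omega

lemma pN_iter_zero (t : ℕ) : pN^[t] 0 = 0 := by
  induction t with
  | zero => rfl
  | succ t ih => rw [Function.iterate_succ_apply, pN_zero, ih]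

lemma pN_pos {b : ℕ} (hb : 2 ≤ b) : 1 ≤ pN b := by
  by_contra h
  push_neg at h
  have h0 : pN b = 0 := by omega
  have := pN_spec b
  rw [h0, cN_zero] at this
  omega

lemma pN_lt {b : ℕ} (hb : 2 ≤ b) : pN b < b := by
  have h0 := pN_pos hb
  have h1 : cN (pN b - 1) < b := pN_min (by omega)
  have h2 := cN_lt (pN b - 1)
  omega

lemma pN_bounds {b : ℕ} (hb : 2 ≤ b) : cN (pN b - 1) < b ∧ b ≤ cN (pN b) :=
  ⟨pN_min (by have := pN_pos hb; omega), pN_spec b⟩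

lemma pN_eq_of {a b : ℕ} (ha : 1 ≤ a) (h1 : cN (a-1) < b) (h2 : b ≤ cN a) : pN b = a := by
  have hub := pN_le h2
  by_contra hne
  have hlt : pN b < a := by omega
  have : cN (pN b) ≤ cN (a-1) := cN_mono (by omega)
  have := pN_spec b
  omega

lemma cAdj_iff {x y : ℕ+} :
    cAdj latticeZ2 x y ↔ (cN ((x:ℕ)-1) < (y:ℕ) ∧ (y:ℕ) ≤ cN (x:ℕ)) := by
  have hx : 1 ≤ (x:ℕ) := x.2
  have hcx : cN (x:ℕ) = (x:ℕ) + isoNum latticeZ2 (x:ℕ) := by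
    unfold cN; rw [isoNum₀_eq hx]
  constructor
  · rintro ⟨h0, h1, h2⟩
    exact ⟨h1, by omega⟩
  · rintro ⟨h1, h2⟩
    have hxy : (x:ℕ) < (y:ℕ) := by
      have := cN_lt ((x:ℕ)-1); omega
    exact ⟨by exact_mod_cast hxy, h1, by omega⟩

lemma cAdj_iff' {x y : ℕ+} :
    cAdj latticeZ2 x y ↔ (2 ≤ (y:ℕ) ∧ pN (y:ℕ) = (x:ℕ)) := by
  have hx : 1 ≤ (x:ℕ) := x.2
  rw [cAdj_iff]
  constructor
  · rintro ⟨h1, h2⟩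
    have hy2 : 2 ≤ (y:ℕ) := by have := cN_lt ((x:ℕ)-1); omega
    exact ⟨hy2, pN_eq_of hx h1 h2⟩
  · rintro ⟨hy2, hp⟩
    have := pN_bounds hy2
    rw [hp] at this
    exact this

lemma gc_adj {x y : ℕ+} : GcZ2.Adj x y ↔ cAdj latticeZ2 x y ∨ cAdj latticeZ2 y x :=
  Iff.rfl

def depN (b : ℕ) : ℕ :=
  if h : b ≤ 1 then 0 else depN (pN b) + 1
termination_by b
decreasing_by exact pN_lt (by omega)

lemma depN_le_one {b : ℕ} (hb : b ≤ 1) : depN b = 0 := by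
  rw [depN, dif_pos hb]

lemma depN_eq {b : ℕ} (hb : 2 ≤ b) : depN b = depN (pN b) + 1 := by
  rw [depN, dif_neg (by omega)]

lemma dep_step {x y : ℕ+} (h : GcZ2.Adj x y) :
    (2 ≤ (y:ℕ) ∧ pN (y:ℕ) = (x:ℕ) ∧ depN (y:ℕ) = depN (x:ℕ) + 1) ∨
    (2 ≤ (x:ℕ) ∧ pN (x:ℕ) = (y:ℕ) ∧ depN (x:ℕ) = depN (y:ℕ) + 1) := by
  rcases gc_adj.mp h with h' | h'
  · obtain ⟨h1, h2⟩ := cAdj_iff'.mp h'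
    exact Or.inl ⟨h1, h2, by rw [depN_eq h1, h2]⟩
  · obtain ⟨h1, h2⟩ := cAdj_iff'.mp h'
    exact Or.inr ⟨h1, h2, by rw [depN_eq h1, h2]⟩

lemma walk_bound {x y : ℕ+} (w : GcZ2.Walk x y) : depN (y:ℕ) ≤ depN (x:ℕ) + w.length := by
  induction w with
  | nil => simp
  | cons h w ih =>
    rcases dep_step h with ⟨_, _, h3⟩ | ⟨_, _, h3⟩ <;>
      simp [SimpleGraph.Walk.length_cons] <;> omega

lemma walk_anc {x y : ℕ+} (w : GcZ2.Walk x y) (h : depN (y:ℕ) = depN (x:ℕ) + w.length) :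
    pN^[w.length] (y:ℕ) = (x:ℕ) := by
  induction w with
  | nil => simp
  | @cons u v yy hadj w ih =>
    rw [SimpleGraph.Walk.length_cons] at h ⊢
    rcases dep_step hadj with ⟨h1, h2, h3⟩ | ⟨h1, h2, h3⟩
    · have hd : depN (yy:ℕ) = depN (v:ℕ) + w.length := by omega
      have := ih hd
      rw [Function.iterate_succ_apply', this, h2]
    · exfalso
      have hb := walk_bound w
      omega

lemma parent_adj {b : ℕ+} (hb : 2 ≤ (b:ℕ)) : GcZ2.Adj (⟨pN (b:ℕ), pN_pos hb⟩ : ℕ+) b := by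
  exact gc_adj.mpr (Or.inl (cAdj_iff'.mpr ⟨hb, rfl⟩))

lemma walk_to_one : ∀ n : ℕ, ∀ b : ℕ+, (b:ℕ) = n → ∃ w : GcZ2.Walk b 1, w.length = depN (b:ℕ) := by
  intro n
  induction n using Nat.strong_induction_on with
  | _ n ih =>
    intro b hb
    by_cases h1 : (b:ℕ) ≤ 1
    · have hb1 : b = 1 := by
        have h2 : 1 ≤ (b:ℕ) := b.2
        have : (b:ℕ) = 1 := by omega
        exact_mod_cast this
      subst hb1
      refine ⟨SimpleGraph.Walk.nil, ?_⟩
      have h3 : ((1:ℕ+):ℕ) = 1 := rfl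
      rw [SimpleGraph.Walk.length_nil, h3, depN_le_one (by omega)]
    · push_neg at h1
      have hb2 : 2 ≤ (b:ℕ) := h1
      set a : ℕ+ := ⟨pN (b:ℕ), pN_pos hb2⟩ with ha
      have hlt : (a:ℕ) < n := by
        have := pN_lt hb2; simp [ha]; omega
      obtain ⟨w', hw'⟩ := ih (a:ℕ) (by omega) a rfl
      refine ⟨SimpleGraph.Walk.cons (parent_adj hb2).symm w', ?_⟩
      change w'.length + 1 = _
      rw [hw', depN_eq hb2]
      rfl

lemma dist_one (b : ℕ+) : GcZ2.dist 1 b = depN (b:ℕ) := by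
  obtain ⟨w, hw⟩ := walk_to_one (b:ℕ) b rfl
  have hub : GcZ2.dist 1 b ≤ depN (b:ℕ) := by
    rw [SimpleGraph.dist_comm]
    exact hw ▸ SimpleGraph.dist_le w
  have hreach : GcZ2.Reachable 1 b := ⟨w.reverse⟩
  obtain ⟨w', hw'⟩ := hreach.exists_walk_length_eq_dist
  have hlb := walk_bound w'
  have hd1 : depN ((1:ℕ+):ℕ) = 0 := depN_le_one (by simp)
  omega

lemma walk_of_anc : ∀ t : ℕ, ∀ k i : ℕ+, pN^[t] (k:ℕ) = (i:ℕ) →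
    ∃ w : GcZ2.Walk k i, w.length = t := by
  intro t
  induction t with
  | zero =>
    intro k i h
    simp at h
    have : k = i := by exact_mod_cast h
    subst this
    exact ⟨SimpleGraph.Walk.nil, rfl⟩
  | succ t ih =>
    intro k i h
    rw [Function.iterate_succ_apply] at h
    have hk2 : 2 ≤ (k:ℕ) := by
      by_contra hc
      push_neg at hc
      have hk0 : 1 ≤ (k:ℕ) := k.2
      have hk1 : (k:ℕ) = 1 := by omega
      rw [hk1, pN_one, pN_iter_zero] at h
      have hi0 : 1 ≤ (i:ℕ) := i.2
      omega
    have hp1 : 1 ≤ pN (k:ℕ) := pN_pos hk2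
    obtain ⟨w', hw'⟩ := ih ⟨pN (k:ℕ), hp1⟩ i h
    exact ⟨SimpleGraph.Walk.cons (parent_adj hk2).symm w', by
      change w'.length + 1 = _
      rw [hw']⟩

lemma dep_of_anc : ∀ t : ℕ, ∀ k i : ℕ, 1 ≤ i → pN^[t] k = i → depN k = depN i + t := by
  intro t
  induction t with
  | zero => intro k i _ h; simp at h; simp [h]
  | succ t ih =>
    intro k i hi h
    rw [Function.iterate_succ_apply] at h
    have hk2 : 2 ≤ k := by
      by_contra hc
      push_neg at hc
      interval_cases k
      · rw [pN_zero, pN_iter_zero] at h; omega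
      · rw [pN_one, pN_iter_zero] at h; omega
    rw [depN_eq hk2, ih (pN k) i hi h]
    omega

lemma anc_of_interval : ∀ t : ℕ, ∀ i k : ℕ, 1 ≤ i → cN^[t] (i-1) < k → k ≤ cN^[t] i →
    pN^[t] k = i := by
  intro t
  induction t with
  | zero => intro i k h1 h2 h3; simp at h2 h3 ⊢; omega
  | succ t ih =>
    intro i k h1 h2 h3
    rw [Function.iterate_succ_apply'] at h2 h3
    have hk2 : 2 ≤ k := by
      have ha := cN_lt (cN^[t] (i-1))
      omega
    have hb := pN_bounds hk2
    have hup : pN k ≤ cN^[t] i := by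
      by_contra hcon
      push_neg at hcon
      have : cN (cN^[t] i) ≤ cN (pN k - 1) := cN_mono (by omega)
      omega
    have hdn : cN^[t] (i-1) < pN k := by
      by_contra hcon
      push_neg at hcon
      have : cN (pN k) ≤ cN (cN^[t] (i-1)) := cN_mono hcon
      omega
    rw [Function.iterate_succ_apply]
    exact ih i (pN k) h1 hdn hup

lemma interval_of_anc : ∀ t : ℕ, ∀ i k : ℕ, 1 ≤ i → pN^[t] k = i →
    cN^[t] (i-1) < k ∧ k ≤ cN^[t] i := by
  intro t
  induction t with
  | zero => intro i k h1 h2; simp at h2 ⊢; omega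
  | succ t ih =>
    intro i k h1 hp
    rw [Function.iterate_succ_apply] at hp
    have hk2 : 2 ≤ k := by
      by_contra hc
      push_neg at hc
      interval_cases k
      · rw [pN_zero, pN_iter_zero] at hp; omega
      · rw [pN_one, pN_iter_zero] at hp; omega
    obtain ⟨h2, h3⟩ := ih i (pN k) h1 hp
    have hb := pN_bounds hk2
    rw [Function.iterate_succ_apply', Function.iterate_succ_apply']
    constructor
    · have : cN (cN^[t] (i-1)) ≤ cN (pN k - 1) := cN_mono (by omega)
      omega
    · have : cN (pN k) ≤ cN (cN^[t] i) := cN_mono h3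
      omega

lemma cN_iter_lt (t : ℕ) {a b : ℕ} (h : a < b) : cN^[t] a < cN^[t] b := by
  induction t with
  | zero => simpa
  | succ t ih => rw [Function.iterate_succ_apply', Function.iterate_succ_apply']
                 exact cN_strictMono ih

lemma cN_iter_le_self (t : ℕ) (n : ℕ) : n ≤ cN^[t] n := by
  induction t with
  | zero => simp
  | succ t ih =>
    rw [Function.iterate_succ_apply']
    have := cN_lt (cN^[t] n)
    omega

lemma cN_iter_mono_exp {s t : ℕ} (h : s ≤ t) (n : ℕ) : cN^[s] n ≤ cN^[t] n := by
  obtain ⟨d, rfl⟩ := Nat.exists_eq_add_of_le h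
  rw [Nat.add_comm s d, Function.iterate_add_apply]
  exact cN_iter_le_self d _

lemma cN_iter4 {i : ℕ} (hi : 1 ≤ i) : i + 4 * LB i ≤ cN^[4] i := by
  have h0 : 1 ≤ i := hi
  have h1 : i + LB i ≤ cN i := cN_ge hi
  have e1 : 1 ≤ cN i := by have := cN_lt i; omega
  have h2 : cN i + LB (cN i) ≤ cN (cN i) := cN_ge e1
  have m1 : LB i ≤ LB (cN i) := LB_mono (by have := cN_lt i; omega)
  have e2 : 1 ≤ cN (cN i) := by have := cN_lt (cN i); omega
  have h3 : cN (cN i) + LB (cN (cN i)) ≤ cN (cN (cN i)) := cN_ge e2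
  have m2 : LB i ≤ LB (cN (cN i)) := LB_mono (by have := cN_lt i; have := cN_lt (cN i); omega)
  have e3 : 1 ≤ cN (cN (cN i)) := by have := cN_lt (cN (cN i)); omega
  have h4 : cN (cN (cN i)) + LB (cN (cN (cN i))) ≤ cN (cN (cN (cN i))) := cN_ge e3
  have m3 : LB i ≤ LB (cN (cN (cN i))) := LB_mono (by
    have := cN_lt i; have := cN_lt (cN i); have := cN_lt (cN (cN i)); omega)
  have : cN^[4] i = cN (cN (cN (cN i))) := by
    simp [Function.iterate_succ_apply', Function.iterate_zero_apply]
  omega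

end Psi


namespace Psi

def idxZ : ℤ × ℤ → ℤ
  | (x, y) =>
    if 1 ≤ x ∧ -x < y ∧ y ≤ x then (2*x-1)^2 + (y + x - 1)
    else if 1 ≤ y ∧ -y ≤ x ∧ x < y then (2*y-1)^2 + ((2*y-1) + (y - x))
    else if x ≤ -1 ∧ x ≤ y ∧ y < -x then (-2*x-1)^2 + (-4*x + (-x - 1 - y))
    else if y ≤ -1 ∧ y < x ∧ x ≤ -y then (-2*y-1)^2 + (-6*y + (x - y - 1))
    else 0

lemma ix0 : idxZ (0, 0) = 0 := by simp [idxZ]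

lemma ix1 {x y : ℤ} (h1 : 1 ≤ x) (h2 : -x < y) (h3 : y ≤ x) :
    idxZ (x, y) = (2*x-1)^2 + (y + x - 1) := by
  simp only [idxZ]
  rw [if_pos ⟨h1, h2, h3⟩]

lemma ix2 {x y : ℤ} (h1 : 1 ≤ y) (h2 : -y ≤ x) (h3 : x < y) :
    idxZ (x, y) = (2*y-1)^2 + ((2*y-1) + (y - x)) := by
  simp only [idxZ]
  rw [if_neg (by omega), if_pos ⟨h1, h2, h3⟩]

lemma ix3 {x y : ℤ} (h1 : x ≤ -1) (h2 : x ≤ y) (h3 : y < -x) :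
    idxZ (x, y) = (-2*x-1)^2 + (-4*x + (-x - 1 - y)) := by
  simp only [idxZ]
  rw [if_neg (by omega), if_neg (by omega), if_pos ⟨h1, h2, h3⟩]

lemma ix4 {x y : ℤ} (h1 : y ≤ -1) (h2 : y < x) (h3 : x ≤ -y) :
    idxZ (x, y) = (-2*y-1)^2 + (-6*y + (x - y - 1)) := by
  simp only [idxZ]
  rw [if_neg (by omega), if_neg (by omega), if_neg (by omega), if_pos ⟨h1, h2, h3⟩]

lemma sn1 : spiralNext (0, 0) = (1, 0) := by
  norm_num [spiralNext]

lemma sn2 {x y : ℤ} (h1 : y < 0) (h2 : y ≤ x) (h3 : x ≤ -y) :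
    spiralNext (x, y) = (x + 1, y) := by
  simp only [spiralNext]
  rw [if_neg (by omega), if_pos ⟨h1, abs_le.mpr ⟨by omega, h3⟩⟩]

lemma sn3 {x y : ℤ} (h1 : 0 < x) (h2 : -x < y) (h3 : y < x) :
    spiralNext (x, y) = (x, y + 1) := by
  simp only [spiralNext]
  rw [if_neg (by omega), if_neg ?hn, if_pos ⟨h1, abs_lt.mpr ⟨by omega, h3⟩⟩]
  case hn =>
    rintro ⟨hy, habs⟩
    rw [abs_of_pos h1] at habs
    omega

lemma sn4 {x y : ℤ} (h1 : 0 < y) (h2 : x ≤ y) (h3 : -x < y) :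
    spiralNext (x, y) = (x - 1, y) := by
  simp only [spiralNext]
  rw [if_neg (by omega), if_neg (by omega), if_neg ?hn, if_pos ⟨h1, h2, h3⟩]
  case hn =>
    rintro ⟨hx, habs⟩
    rw [abs_of_pos h1] at habs
    omega

lemma sn5 {x y : ℤ} (h1 : x ≤ -1) (h2 : x < y) (h3 : y ≤ -x) :
    spiralNext (x, y) = (x, y - 1) := by
  simp only [spiralNext]
  rw [if_neg (by omega), if_neg ?h2, if_neg (by omega), if_neg (by omega)]
  case h2 =>
    rintro ⟨hy, habs⟩
    rw [abs_of_neg (by omega : x < 0)] at habs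
    omega

lemma idxZ_next (p : ℤ × ℤ) : idxZ (spiralNext p) = idxZ p + 1 := by
  obtain ⟨x, y⟩ := p
  by_cases h0 : x = 0 ∧ y = 0
  · obtain ⟨rfl, rfl⟩ := h0
    rw [sn1, ix0, ix1 (by omega) (by omega) (by omega)]
    ring
  -- now (x,y) ≠ 0; five geometric cases
  by_cases hR1 : 1 ≤ x ∧ -x < y ∧ y ≤ x
  · -- right edge
    obtain ⟨a1, a2, a3⟩ := hR1
    by_cases hc : y = x
    · -- top-right corner, move left is NOT what spiralNext does here: 0<y, x≤y, -x<y : move to (x-1,y)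
      subst hc
      rw [sn4 (by omega) (by omega) (by omega),
        ix1 a1 a2 a3, ix2 (by omega) (by omega) (by omega)]
      ring
    · -- interior of right edge: move up
      rw [sn3 (by omega) (by omega) (by omega), ix1 a1 a2 a3]
      by_cases hc2 : y + 1 ≤ x
      · rw [ix1 (by omega) (by omega) (by omega)]; ring
      · have : y + 1 = x := by omega
        rw [ix1 (by omega) (by omega) (by omega)]; ring
  by_cases hR2 : 1 ≤ y ∧ -y ≤ x ∧ x < y
  · obtain ⟨a1, a2, a3⟩ := hR2
    by_cases hc : x = -y
    · -- top-left corner: move down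
      subst hc
      rw [sn5 (by omega) (by omega) (by omega),
        ix2 a1 a2 a3, ix3 (by omega) (by omega) (by omega)]
      ring
    · -- interior of top edge: move left
      rw [sn4 (by omega) (by omega) (by omega), ix2 a1 a2 a3,
        ix2 (by omega) (by omega) (by omega)]
      ring
  by_cases hR3 : x ≤ -1 ∧ x ≤ y ∧ y < -x
  · obtain ⟨a1, a2, a3⟩ := hR3
    by_cases hc : y = x
    · -- bottom-left corner: move right
      subst hc
      rw [sn2 (by omega) (by omega) (by omega),
        ix3 a1 a2 a3, ix4 (by omega) (by omega) (by omega)]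
      ring
    · -- interior of left edge: move down
      rw [sn5 (by omega) (by omega) (by omega), ix3 a1 a2 a3,
        ix3 (by omega) (by omega) (by omega)]
      ring
  -- remaining: R4 (bottom edge), y ≤ -1, y < x, x ≤ -y
  have hR4 : y ≤ -1 ∧ y < x ∧ x ≤ -y := by omega
  obtain ⟨a1, a2, a3⟩ := hR4
  rw [sn2 (by omega) (by omega) (by omega), ix4 a1 a2 a3]
  by_cases hc : x = -y
  · -- bottom-right corner: move right into new ring
    subst hc
    rw [ix1 (by omega) (by omega) (by omega)]
    ring
  · rw [ix4 (by omega) (by omega) (by omega)]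
    ring

lemma idxZ_spiral (n : ℕ) : idxZ (spiral n) = (n : ℤ) := by
  induction n with
  | zero => simpa [spiral] using ix0
  | succ n ih =>
    have : spiral (n+1) = spiralNext (spiral n) := Function.iterate_succ_apply' _ _ _
    rw [this, idxZ_next, ih]
    push_cast
    ring

end Psi


namespace Psi

lemma lb_R1 {x y : ℤ} (h1 : 1 ≤ x) (h2 : -x < y) (h3 : y ≤ x) :
    (2*x-1)^2 ≤ idxZ (x, y) := by
  rw [ix1 h1 h2 h3]; linarith

lemma lb_R2 {x y : ℤ} (h1 : 1 ≤ y) (h2 : -y ≤ x) (h3 : x < y) :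
    (2*y-1)^2 ≤ idxZ (x, y) := by
  rw [ix2 h1 h2 h3]; linarith

lemma lb_R3 {x y : ℤ} (h1 : x ≤ -1) (h2 : x ≤ y) (h3 : y < -x) :
    (-2*x-1)^2 ≤ idxZ (x, y) := by
  rw [ix3 h1 h2 h3]; linarith

lemma lb_R4 {x y : ℤ} (h1 : y ≤ -1) (h2 : y < x) (h3 : x ≤ -y) :
    (-2*y-1)^2 ≤ idxZ (x, y) := by
  rw [ix4 h1 h2 h3]; linarith

lemma nb_R1 {x y : ℤ} (h1 : 2 ≤ x) (h2 : -x < y) (h3 : y ≤ x) (q : ℤ × ℤ)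
    (hq : q = (x+1,y) ∨ q = (x-1,y) ∨ q = (x,y+1) ∨ q = (x,y-1)) :
    idxZ q ≤ idxZ (x, y) + 8*x + 8 := by
  rw [ix1 (by omega) h2 h3]
  rcases hq with rfl | rfl | rfl | rfl
  · rw [ix1 (by omega) (by omega) (by omega)]; nlinarith
  · by_cases hc : y = x
    · subst hc; rw [ix2 (by omega) (by omega) (by omega)]; nlinarith
    by_cases hc2 : y = 1 - x
    · subst hc2; rw [ix4 (by omega) (by omega) (by omega)]; nlinarith
    · rw [ix1 (by omega) (by omega) (by omega)]; nlinarith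
  · by_cases hc : y = x
    · subst hc; rw [ix2 (by omega) (by omega) (by omega)]; nlinarith
    · rw [ix1 (by omega) (by omega) (by omega)]; nlinarith
  · by_cases hc : y = 1 - x
    · subst hc; rw [ix4 (by omega) (by omega) (by omega)]; nlinarith
    · rw [ix1 (by omega) (by omega) (by omega)]; nlinarith

lemma nb_R2 {x y : ℤ} (h1 : 2 ≤ y) (h2 : -y ≤ x) (h3 : x < y) (q : ℤ × ℤ)
    (hq : q = (x+1,y) ∨ q = (x-1,y) ∨ q = (x,y+1) ∨ q = (x,y-1)) :
    idxZ q ≤ idxZ (x, y) + 8*y + 8 := by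
  rw [ix2 (by omega) h2 h3]
  rcases hq with rfl | rfl | rfl | rfl
  · by_cases hc : x + 1 = y
    · rw [ix1 (by omega) (by omega) (by omega)]; nlinarith
    · rw [ix2 (by omega) (by omega) (by omega)]; nlinarith
  · by_cases hc : x = -y
    · subst hc; rw [ix3 (by omega) (by omega) (by omega)]; nlinarith
    · rw [ix2 (by omega) (by omega) (by omega)]; nlinarith
  · rw [ix2 (by omega) (by omega) (by omega)]; nlinarith
  · by_cases hc : x = y - 1
    · subst hc; rw [ix1 (by omega) (by omega) (by omega)]; nlinarith
    by_cases hc2 : x = -y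
    · subst hc2; rw [ix3 (by omega) (by omega) (by omega)]; nlinarith
    · rw [ix2 (by omega) (by omega) (by omega)]; nlinarith

lemma nb_R3 {x y : ℤ} (h1 : x ≤ -2) (h2 : x ≤ y) (h3 : y < -x) (q : ℤ × ℤ)
    (hq : q = (x+1,y) ∨ q = (x-1,y) ∨ q = (x,y+1) ∨ q = (x,y-1)) :
    idxZ q ≤ idxZ (x, y) + 8*(-x) + 8 := by
  rw [ix3 (by omega) h2 h3]
  rcases hq with rfl | rfl | rfl | rfl
  · by_cases hc : y = -x - 1
    · subst hc; rw [ix2 (by omega) (by omega) (by omega)]; nlinarith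
    by_cases hc2 : y = x
    · subst hc2; rw [ix4 (by omega) (by omega) (by omega)]; nlinarith
    · rw [ix3 (by omega) (by omega) (by omega)]; nlinarith
  · rw [ix3 (by omega) (by omega) (by omega)]; nlinarith
  · by_cases hc : y + 1 = -x
    · rw [ix2 (by omega) (by omega) (by omega)]; nlinarith
    · rw [ix3 (by omega) (by omega) (by omega)]; nlinarith
  · by_cases hc : y = x
    · subst hc; rw [ix4 (by omega) (by omega) (by omega)]; nlinarith
    · rw [ix3 (by omega) (by omega) (by omega)]; nlinarith

lemma nb_R4 {x y : ℤ} (h1 : y ≤ -2) (h2 : y < x) (h3 : x ≤ -y) (q : ℤ × ℤ)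
    (hq : q = (x+1,y) ∨ q = (x-1,y) ∨ q = (x,y+1) ∨ q = (x,y-1)) :
    idxZ q ≤ idxZ (x, y) + 8*(-y) + 8 := by
  rw [ix4 (by omega) h2 h3]
  rcases hq with rfl | rfl | rfl | rfl
  · by_cases hc : x = -y
    · subst hc; rw [ix1 (by omega) (by omega) (by omega)]; nlinarith
    · rw [ix4 (by omega) (by omega) (by omega)]; nlinarith
  · by_cases hc : x = y + 1
    · subst hc; rw [ix3 (by omega) (by omega) (by omega)]; nlinarith
    · rw [ix4 (by omega) (by omega) (by omega)]; nlinarith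
  · by_cases hc : x = y + 1
    · subst hc; rw [ix3 (by omega) (by omega) (by omega)]; nlinarith
    by_cases hc2 : x = -y
    · subst hc2; rw [ix1 (by omega) (by omega) (by omega)]; nlinarith
    · rw [ix4 (by omega) (by omega) (by omega)]; nlinarith
  · rw [ix4 (by omega) (by omega) (by omega)]; nlinarith

lemma neighbor_bound {p q : ℤ × ℤ} (hadj : latticeZ2.Adj p q) :
    (∃ r : ℤ, 2 ≤ r ∧ (2*r-1)^2 ≤ idxZ p ∧ idxZ q ≤ idxZ p + 8*r + 8) ∨
    (idxZ p ≤ 8 ∧ idxZ q ≤ 24 ∧ (idxZ p = 0 → idxZ q ≤ 7) ∧ (idxZ p = 1 → idxZ q ≤ 10) ∧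
     (idxZ p = 2 → idxZ q ≤ 13) ∧ (idxZ p = 3 → idxZ q ≤ 14)) := by
  obtain ⟨x, y⟩ := p
  obtain ⟨qx, qy⟩ := q
  have h4 := adj_cases hadj
  simp only at h4
  have hq : (qx, qy) = ((x+1 : ℤ), y) ∨ (qx, qy) = ((x-1 : ℤ), y) ∨
      (qx, qy) = ((x : ℤ), y+1) ∨ (qx, qy) = ((x : ℤ), y-1) := by
    rcases h4 with ⟨e1,e2⟩|⟨e1,e2⟩|⟨e1,e2⟩|⟨e1,e2⟩
    · left; rw [e1, e2]
    · right; left; rw [e1, e2]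
    · right; right; left; rw [e1, e2]
    · right; right; right; rw [e1, e2]
  by_cases hsmall : -1 ≤ x ∧ x ≤ 1 ∧ -1 ≤ y ∧ y ≤ 1
  · right
    obtain ⟨s1, s2, s3, s4⟩ := hsmall
    rcases hq with hq | hq | hq | hq <;> rw [hq] <;>
      interval_cases x <;> interval_cases y <;> decide
  · left
    have hreg : (2 ≤ x ∧ -x < y ∧ y ≤ x) ∨ (2 ≤ y ∧ -y ≤ x ∧ x < y) ∨
        (x ≤ -2 ∧ x ≤ y ∧ y < -x) ∨ (y ≤ -2 ∧ y < x ∧ x ≤ -y) := by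
      omega
    rcases hreg with ⟨a1,a2,a3⟩ | ⟨a1,a2,a3⟩ | ⟨a1,a2,a3⟩ | ⟨a1,a2,a3⟩
    · exact ⟨x, by omega, lb_R1 (by omega) a2 a3, nb_R1 a1 a2 a3 _ hq⟩
    · exact ⟨y, by omega, lb_R2 (by omega) a2 a3, nb_R2 a1 a2 a3 _ hq⟩
    · exact ⟨-x, by omega, by simpa using lb_R3 (by omega) a2 a3, nb_R3 a1 a2 a3 _ hq⟩
    · exact ⟨-y, by omega, by simpa using lb_R4 (by omega) a2 a3, nb_R4 a1 a2 a3 _ hq⟩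

lemma spiral_gap {a b : ℕ} (hadj : latticeZ2.Adj (spiral a) (spiral b)) :
    (b : ℕ) ≤ a + 4 * Nat.sqrt (4*a + 3) + 4 := by
  have ha := idxZ_spiral a
  have hb := idxZ_spiral b
  rcases neighbor_bound hadj with ⟨r, hr2, hlb, hub⟩ | ⟨h8, h24, h0, h1, h2, h3⟩
  · rw [ha] at hlb hub
    rw [hb] at hub
    set rn := r.toNat with hrn
    have hr : (rn : ℤ) = r := Int.toNat_of_nonneg (by omega)
    have hrn2 : 2 ≤ rn := by
      have : (2:ℤ) ≤ (rn:ℤ) := by rw [hr]; exact hr2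
      exact_mod_cast this
    have hlbn : (2*rn - 1) * (2*rn - 1) ≤ a := by
      zify [show 1 ≤ 2*rn by omega]
      calc (2*(rn:ℤ) - 1) * (2*(rn:ℤ) - 1) = (2*(rn:ℤ)-1)^2 := by ring
        _ = (2*r-1)^2 := by rw [hr]
        _ ≤ (a:ℤ) := hlb
    have hsq : 2*(2*rn - 1) ≤ Nat.sqrt (4*a + 3) := by
      rw [Nat.le_sqrt]
      calc 2*(2*rn-1) * (2*(2*rn-1)) = 4*((2*rn-1)*(2*rn-1)) := by ring
        _ ≤ 4*a + 3 := by omega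
    have hubn : b ≤ a + 8*rn + 8 := by
      have h' : (b : ℤ) ≤ (a : ℤ) + 8*rn + 8 := by rw [hr]; exact hub
      exact_mod_cast h'
    omega
  · rw [ha] at h8 h0 h1 h2 h3
    rw [hb] at h24 h0 h1 h2 h3
    have ha8 : a ≤ 8 := by exact_mod_cast h8
    have hb24 : b ≤ 24 := by exact_mod_cast h24
    interval_cases a
    · have hB : (b:ℤ) ≤ 7 := h0 rfl
      have hbn : b ≤ 7 := by exact_mod_cast hB
      have hs : 1 ≤ Nat.sqrt (4*0+3) := Nat.le_sqrt.mpr (by norm_num)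
      omega
    · have hB : (b:ℤ) ≤ 10 := h1 rfl
      have hbn : b ≤ 10 := by exact_mod_cast hB
      have hs : 2 ≤ Nat.sqrt (4*1+3) := Nat.le_sqrt.mpr (by norm_num)
      omega
    · have hB : (b:ℤ) ≤ 13 := h2 rfl
      have hbn : b ≤ 13 := by exact_mod_cast hB
      have hs : 3 ≤ Nat.sqrt (4*2+3) := Nat.le_sqrt.mpr (by norm_num)
      omega
    · have hB : (b:ℤ) ≤ 14 := h3 rfl
      have hbn : b ≤ 14 := by exact_mod_cast hB
      have hs : 3 ≤ Nat.sqrt (4*3+3) := Nat.le_sqrt.mpr (by norm_num)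
      omega
    · have hs : 4 ≤ Nat.sqrt (4*4+3) := Nat.le_sqrt.mpr (by norm_num)
      omega
    · have hs : 4 ≤ Nat.sqrt (4*5+3) := Nat.le_sqrt.mpr (by norm_num)
      omega
    · have hs : 5 ≤ Nat.sqrt (4*6+3) := Nat.le_sqrt.mpr (by norm_num)
      omega
    · have hs : 5 ≤ Nat.sqrt (4*7+3) := Nat.le_sqrt.mpr (by norm_num)
      omega
    · have hs : 5 ≤ Nat.sqrt (4*8+3) := Nat.le_sqrt.mpr (by norm_num)
      omega

end Psi


namespace Psi

lemma cN_iter_mono (t : ℕ) {a b : ℕ} (h : a ≤ b) : cN^[t] a ≤ cN^[t] b := by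
  rcases Nat.lt_or_ge a b with h' | h'
  · exact le_of_lt (cN_iter_lt t h')
  · have : a = b := by omega
    rw [this]

lemma dist_anc {i k : ℕ+} (t : ℕ) (h : pN^[t] (k:ℕ) = (i:ℕ)) : GcZ2.dist i k = t := by
  obtain ⟨w, hw⟩ := walk_of_anc t k i h
  have hub : GcZ2.dist i k ≤ t := by
    rw [SimpleGraph.dist_comm]
    exact hw ▸ SimpleGraph.dist_le w
  have hreach : GcZ2.Reachable i k := ⟨w.reverse⟩
  obtain ⟨w', hw'⟩ := hreach.exists_walk_length_eq_dist
  have hlb := walk_bound w'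
  have hdep : depN (k:ℕ) = depN (i:ℕ) + t := dep_of_anc t (k:ℕ) (i:ℕ) i.2 h
  omega

end Psi

open Psi in
theorem Psi_short_paths' (i j : ℕ+) (hij : i < j)
    (hadj : latticeZ2.Adj (spiral ((i : ℕ) - 1)) (spiral ((j : ℕ) - 1))) :
    ∃ k : ℕ+, IsLeast {k' : ℕ+ | j ≤ k' ∧ liesOnPathFromOne i k'} k
      ∧ GcZ2.dist i k ≤ 4 := by
  classical
  set ni := (i : ℕ) with hni
  set nj := (j : ℕ) with hnj
  have hi1 : 1 ≤ ni := i.2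
  have hij' : ni < nj := by exact_mod_cast hij
  have hj2 : 2 ≤ nj := by omega
  -- quantitative bound
  have hgap : nj ≤ cN^[4] ni := by
    have hg := spiral_gap hadj
    have harg : 4*(ni-1)+3 = 4*ni - 1 := by omega
    rw [harg] at hg
    have h4 := cN_iter4 hi1
    have hlb : LB ni = Nat.sqrt (4*ni-1) + 1 := rfl
    omega
  have hex : ∃ t, nj ≤ cN^[t] ni := ⟨4, hgap⟩
  set t := Nat.find hex with htdef
  have ht4 : t ≤ 4 := Nat.find_le hgap
  have htspec : nj ≤ cN^[t] ni := Nat.find_spec hex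
  have ht1 : 1 ≤ t := by
    rcases Nat.eq_zero_or_pos t with h0 | h
    · exfalso
      have := htspec
      rw [h0] at this
      simp at this
      omega
    · exact h
  set kn := max nj (cN^[t] (ni-1) + 1) with hkn
  have hk_le : kn ≤ cN^[t] ni := by
    have h2 : cN^[t] (ni-1) < cN^[t] ni := cN_iter_lt t (by omega)
    exact max_le htspec (by omega)
  have hk_gt : cN^[t] (ni-1) < kn := lt_of_lt_of_le (by omega) (le_max_right _ _)
  have hanc : pN^[t] kn = ni := anc_of_interval t ni kn hi1 hk_gt hk_le
  have hknpos : 0 < kn := lt_of_lt_of_le (by omega) (le_max_left _ _)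
  set k : ℕ+ := ⟨kn, hknpos⟩ with hk
  have hkco : (k:ℕ) = kn := rfl
  have hdk : GcZ2.dist i k = t := dist_anc t (by rw [hkco]; exact hanc)
  have hdepk : depN kn = depN ni + t := dep_of_anc t kn ni hi1 hanc
  have hlies : liesOnPathFromOne i k := by
    unfold liesOnPathFromOne
    rw [dist_one i, dist_one k, hdk, hkco, hdepk]
  have hjk : j ≤ k := by
    have : nj ≤ kn := le_max_left _ _
    exact_mod_cast this
  refine ⟨k, ⟨⟨hjk, hlies⟩, ?_⟩, by omega⟩
  -- least
  rintro k' ⟨hjk', hlies'⟩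
  have hreach : GcZ2.Reachable i k' := by
    obtain ⟨wi, _⟩ := walk_to_one (i:ℕ) i rfl
    obtain ⟨wk, _⟩ := walk_to_one ((k':ℕ+):ℕ) k' rfl
    exact (SimpleGraph.Walk.reachable wi).trans (SimpleGraph.Walk.reachable wk).symm
  obtain ⟨w, hw⟩ := hreach.exists_walk_length_eq_dist
  have heq0 : depN ni + GcZ2.dist i k' = depN ((k':ℕ+):ℕ) := by
    have h3 : GcZ2.dist 1 i + GcZ2.dist i k' = GcZ2.dist 1 k' := hlies'
    rw [dist_one i, dist_one k'] at h3
    exact h3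
  have heq : depN ((k':ℕ+):ℕ) = depN ni + w.length := by
    rw [hw]
    omega
  have hanc' : pN^[w.length] ((k':ℕ+):ℕ) = ni := walk_anc w heq
  obtain ⟨hlow, hhigh⟩ := interval_of_anc w.length ni ((k':ℕ+):ℕ) hi1 hanc'
  have hjk'n : nj ≤ ((k':ℕ+):ℕ) := by exact_mod_cast hjk'
  have htle : t ≤ w.length := Nat.find_min' hex (le_trans hjk'n hhigh)
  have hfinal : kn ≤ ((k':ℕ+):ℕ) := by
    rcases Nat.eq_or_lt_of_le htle with hEq | hLt
    · rw [← hEq] at hlow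
      omega
    · have h1 : cN^[t] ni ≤ cN^[t] (cN (ni-1)) := cN_iter_mono t (by have := cN_lt (ni-1); omega)
      have h2 : cN^[t] (cN (ni-1)) = cN^[t+1] (ni-1) := (Function.iterate_succ_apply cN t (ni-1)).symm
      have h3 : cN^[t+1] (ni-1) ≤ cN^[w.length] (ni-1) := cN_iter_mono_exp (by omega) _
      omega
  exact_mod_cast hfinal


/-- **Lemma (`Ψ` maps edges to short paths).**  Identify `ℤ²` with `ℕ_{≥1}` via the
spiral labelling.  If `(i, j)` with `i < j` is an edge of the lattice graph, then the
smallest integer `k` with `k ≥ j` such that `i` lies on the path from `1` to `k` in the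
universal comparison graph `G_c` satisfies `d_{G_c}(i, k) ≤ 4`; i.e. the path `Ψ(i,j)`
has length at most `4`. -/
theorem Psi_short_paths (i j : ℕ+) (hij : i < j)
    (hadj : latticeZ2.Adj (spiral ((i : ℕ) - 1)) (spiral ((j : ℕ) - 1))) :
    ∃ k : ℕ+, IsLeast {k' : ℕ+ | j ≤ k' ∧ liesOnPathFromOne i k'} k
      ∧ GcZ2.dist i k ≤ 4 :=
  Psi_short_paths' i j hij hadj
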